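/- Let λ > 0, μ > 0, c > 0 and define, for x ∈ ℝ² with ‖x‖ > 0, p_h(x) = (λμ/(2πc)) ∫_{‖x‖/c}^∞ e^{-(λ+μ)τ} exp((λ/c)√(c²τ² - ‖x‖²)) / √(c²τ² - ‖x‖²) dτ. Then p_h(x) = (λμ/(2π^{3/2} c²)) ∑_{k=0}^∞ (λ^k/k!) Γ((k+1)/2) (2‖x‖/(c(λ+μ)))^{k/2} K_{k/2}((λ+μ)‖x‖/c), where K_ν is the McDonald function of order ν. -/

import Mathlib

open MeasureTheory Real Set
open Filter

/-- McDonald function (modified Bessel function of the second kind) of order `ν`,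
via its integral representation `K_ν z = ∫_0^∞ e^{-z cosh u} cosh (ν u) du`. -/
noncomputable def besselK (ν z : ℝ) : ℝ :=
  ∫ u in Ioi (0 : ℝ), Real.exp (-z * Real.cosh u) * Real.cosh (ν * u)


lemma exp_cosh_decay (z : ℝ) (hz : 0 < z) (n : ℕ) :
    ∀ᶠ u : ℝ in atTop, Real.exp (-z * Real.cosh u) * Real.exp (n * u) ≤ Real.exp (-u) := by
  filter_upwards [eventually_ge_atTop (max 1 (8 * (n + 2) / z))] with u hu
  have hu1 : (1:ℝ) ≤ u := le_trans (le_max_left _ _) hu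
  have hu2 : 8 * ((n:ℝ) + 2) / z ≤ u := le_trans (le_max_right _ _) hu
  have hu2' : 8 * ((n:ℝ) + 2) ≤ z * u := by
    rw [div_le_iff₀ hz] at hu2; linarith
  rw [← Real.exp_add, Real.exp_le_exp]
  have h1 : Real.exp u / 2 ≤ Real.cosh u := by
    rw [Real.cosh_eq]
    have := (Real.exp_pos (-u)).le
    linarith
  have h2 : u ^ 2 / 4 ≤ Real.exp u := by
    have h3 : 1 + u / 2 ≤ Real.exp (u / 2) := by
      have := Real.add_one_le_exp (u / 2); linarith
    have h4 : Real.exp (u/2) * Real.exp (u/2) = Real.exp u := by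
      rw [← Real.exp_add]; ring_nf
    nlinarith [Real.exp_pos (u/2)]
  have h5 : u ^ 2 / 8 ≤ Real.cosh u := by linarith
  -- z * cosh u ≥ z * u^2/8 = (z*u/8)*u ≥ (n+2) * u ≥ (n+1)*u
  have h6 : ((n:ℝ) + 2) * u ≤ z * Real.cosh u := by
    have : ((n:ℝ)+2) * u ≤ (z * u / 8) * u := by
      apply mul_le_mul_of_nonneg_right _ (by linarith)
      linarith
    nlinarith [Real.cosh_pos u, hz]
  nlinarith [Nat.cast_nonneg (α := ℝ) n]

lemma integrableOn_exp_cosh_mul {f : ℝ → ℝ} (z : ℝ) (hz : 0 < z) (n : ℕ)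
    (hf : Continuous f) (hb : ∀ u, 0 ≤ u → |f u| ≤ Real.exp (n * u)) :
    IntegrableOn (fun u => Real.exp (-z * Real.cosh u) * f u) (Ioi (0:ℝ)) := by
  apply integrable_of_isBigO_exp_neg (a := 0) (b := 1) one_pos
  · exact ((Real.continuous_exp.comp
      ((continuous_const.mul Real.continuous_cosh))).mul hf).continuousOn
  · apply Filter.Eventually.isBigO
    filter_upwards [exp_cosh_decay z hz n, eventually_ge_atTop (0:ℝ)] with u h1 h2
    rw [Real.norm_eq_abs, abs_mul, abs_of_pos (Real.exp_pos _)]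
    calc Real.exp (-z * Real.cosh u) * |f u|
        ≤ Real.exp (-z * Real.cosh u) * Real.exp (n * u) :=
          mul_le_mul_of_nonneg_left (hb u h2) (Real.exp_pos _).le
      _ ≤ Real.exp (-1 * u) := by rw [neg_one_mul]; exact h1

lemma tendsto_exp_cosh_mul {f : ℝ → ℝ} (z : ℝ) (hz : 0 < z) (n : ℕ)
    (hb : ∀ u, 0 ≤ u → |f u| ≤ Real.exp (n * u)) :
    Tendsto (fun u => Real.exp (-z * Real.cosh u) * f u) atTop (nhds 0) := by
  refine squeeze_zero_norm' (a := fun u => Real.exp (-u)) ?_ Real.tendsto_exp_neg_atTop_nhds_zero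
  · filter_upwards [exp_cosh_decay z hz n, eventually_ge_atTop (0:ℝ)] with u h1 h2
    rw [Real.norm_eq_abs, abs_mul, abs_of_pos (Real.exp_pos _)]
    exact le_trans (mul_le_mul_of_nonneg_left (hb u h2) (Real.exp_pos _).le) h1

-- ### pointwise bounds
lemma sinh_le_exp {u : ℝ} (hu : 0 ≤ u) : Real.sinh u ≤ Real.exp u := by
  rw [Real.sinh_eq]
  have := (Real.exp_pos (-u)).le
  linarith [Real.exp_pos u]

lemma cosh_le_exp {u : ℝ} (hu : 0 ≤ u) : Real.cosh u ≤ Real.exp u := by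
  rw [Real.cosh_eq]
  have h : Real.exp (-u) ≤ Real.exp u := Real.exp_le_exp.2 (by linarith)
  linarith [Real.exp_pos u]

lemma abs_sinh_pow_le {u : ℝ} (hu : 0 ≤ u) (k : ℕ) :
    |Real.sinh u ^ k| ≤ Real.exp (k * u) := by
  rw [abs_pow, abs_of_nonneg (Real.sinh_nonneg_iff.2 hu), Real.exp_nat_mul]
  exact pow_le_pow_left₀ (Real.sinh_nonneg_iff.2 hu) (sinh_le_exp hu) k

lemma abs_cosh_mul_sinh_pow_le {u : ℝ} (hu : 0 ≤ u) (k : ℕ) :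
    |Real.cosh u * Real.sinh u ^ k| ≤ Real.exp ((k + 1) * u) := by
  rw [abs_mul, abs_of_pos (Real.cosh_pos u)]
  have h1 := abs_sinh_pow_le hu k
  have h2 := cosh_le_exp hu
  calc Real.cosh u * |Real.sinh u ^ k| ≤ Real.exp u * Real.exp (k * u) := by
        apply mul_le_mul h2 h1 (abs_nonneg _) (Real.exp_pos u).le
    _ = Real.exp ((k + 1) * u) := by rw [← Real.exp_add]; ring_nf

lemma abs_cosh_mul_le (ν : ℝ) {u : ℝ} (hu : 0 ≤ u) :
    |Real.cosh (ν * u)| ≤ Real.exp ((⌈|ν|⌉₊ : ℝ) * u) := by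
  rw [abs_of_pos (Real.cosh_pos _), ← Real.cosh_abs, abs_mul]
  calc Real.cosh (|ν| * |u|) ≤ Real.exp (|ν| * |u|) := cosh_le_exp (by positivity)
    _ ≤ _ := by
        apply Real.exp_le_exp.2
        apply mul_le_mul_of_nonneg_right (Nat.le_ceil _) (abs_nonneg u)
        |>.trans_eq (by rw [abs_of_nonneg hu])

-- ### integrability
lemma int_SS (k : ℕ) {z : ℝ} (hz : 0 < z) :
    IntegrableOn (fun u => Real.exp (-z * Real.cosh u) * Real.sinh u ^ k) (Ioi (0:ℝ)) :=
  integrableOn_exp_cosh_mul z hz k (Real.continuous_sinh.pow k) fun u hu => abs_sinh_pow_le hu k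

lemma int_CC (k : ℕ) {z : ℝ} (hz : 0 < z) :
    IntegrableOn (fun u => Real.exp (-z * Real.cosh u) * (Real.cosh u * Real.sinh u ^ k))
      (Ioi (0:ℝ)) :=
  integrableOn_exp_cosh_mul z hz (k+1)
    (Real.continuous_cosh.mul (Real.continuous_sinh.pow k))
    (fun u hu => by push_cast; exact abs_cosh_mul_sinh_pow_le hu k)

lemma int_K (ν : ℝ) {z : ℝ} (hz : 0 < z) :
    IntegrableOn (fun u => Real.exp (-z * Real.cosh u) * Real.cosh (ν * u)) (Ioi (0:ℝ)) :=
  integrableOn_exp_cosh_mul z hz ⌈|ν|⌉₊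
    (Real.continuous_cosh.comp (continuous_const.mul continuous_id'))
    (fun u hu => abs_cosh_mul_le ν hu)

noncomputable def SS (k : ℕ) (z : ℝ) : ℝ :=
  ∫ u in Ioi (0:ℝ), Real.exp (-z * Real.cosh u) * Real.sinh u ^ k

noncomputable def CC (k : ℕ) (z : ℝ) : ℝ :=
  ∫ u in Ioi (0:ℝ), Real.exp (-z * Real.cosh u) * (Real.cosh u * Real.sinh u ^ k)

lemma hasDerivAt_E (z u : ℝ) :
    HasDerivAt (fun u => Real.exp (-z * Real.cosh u))
      (Real.exp (-z * Real.cosh u) * (-z * Real.sinh u)) u :=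
  ((Real.hasDerivAt_cosh u).const_mul (-z)).exp

lemma rec_a (k : ℕ) {z : ℝ} (hz : 0 < z) : z * SS (k+2) z = (k+1) * CC k z := by
  have hderiv : ∀ u ∈ Ici (0:ℝ), HasDerivAt (fun u => Real.exp (-z * Real.cosh u) * Real.sinh u ^ (k+1))
      (((k:ℝ)+1) * (Real.exp (-z * Real.cosh u) * (Real.cosh u * Real.sinh u ^ k))
        - z * (Real.exp (-z * Real.cosh u) * Real.sinh u ^ (k+2))) u := by
    intro u _
    have h := (hasDerivAt_E z u).mul ((Real.hasDerivAt_sinh u).pow (k+1))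
    refine h.congr_deriv (Eq.symm ?_)
    simp only [Pi.mul_apply, Pi.pow_apply, Nat.add_sub_cancel]
    push_cast
    ring
  have hint : IntegrableOn (fun u => ((k:ℝ)+1) * (Real.exp (-z * Real.cosh u) * (Real.cosh u * Real.sinh u ^ k))
      - z * (Real.exp (-z * Real.cosh u) * Real.sinh u ^ (k+2))) (Ioi (0:ℝ)) :=
    ((int_CC k hz).const_mul _).sub ((int_SS (k+2) hz).const_mul _)
  have htend : Tendsto (fun u => Real.exp (-z * Real.cosh u) * Real.sinh u ^ (k+1)) atTop (nhds 0) :=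
    tendsto_exp_cosh_mul z hz (k+1) (fun u hu => abs_sinh_pow_le hu (k+1))
  have hI := integral_Ioi_of_hasDerivAt_of_tendsto' hderiv hint htend
  rw [integral_sub ((int_CC k hz).const_mul _) ((int_SS (k+2) hz).const_mul _),
    integral_const_mul, integral_const_mul] at hI
  simp only [Real.cosh_zero, Real.sinh_zero, mul_one, zero_pow (Nat.succ_ne_zero k),
    mul_zero, sub_zero, zero_sub, neg_zero] at hI
  rw [show SS (k+2) z = ∫ u in Ioi (0:ℝ), Real.exp (-z * Real.cosh u) * Real.sinh u ^ (k+2) from rfl,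
      show CC k z = ∫ u in Ioi (0:ℝ), Real.exp (-z * Real.cosh u) * (Real.cosh u * Real.sinh u ^ k) from rfl]
  linarith

lemma SS_zero {z : ℝ} : SS 0 z = besselK 0 z := by
  unfold SS besselK
  congr 1; ext u
  simp

lemma CC_zero {z : ℝ} : CC 0 z = besselK 1 z := by
  unfold CC besselK
  congr 1; ext u
  simp

lemma SS_one {z : ℝ} (hz : 0 < z) : SS 1 z = Real.exp (-z) / z := by
  have hderiv : ∀ u ∈ Ici (0:ℝ), HasDerivAt (fun u => -Real.exp (-z * Real.cosh u) / z)
      (Real.exp (-z * Real.cosh u) * Real.sinh u ^ 1) u := by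
    intro u _
    have h := ((hasDerivAt_E z u).neg).div_const z
    refine h.congr_deriv (Eq.symm ?_)
    field_simp
  have hint : IntegrableOn (fun u => Real.exp (-z * Real.cosh u) * Real.sinh u ^ 1) (Ioi (0:ℝ)) :=
    int_SS 1 hz
  have htend : Tendsto (fun u => -Real.exp (-z * Real.cosh u) / z) atTop (nhds 0) := by
    have h := tendsto_exp_cosh_mul (f := fun _ => 1) z hz 0 (fun u hu => by norm_num)
    have h2 := (h.neg).div_const z
    simp only [mul_one, neg_zero, zero_div] at h2
    exact h2
  have hI := integral_Ioi_of_hasDerivAt_of_tendsto' hderiv hint htend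
  simp only [Real.cosh_zero, mul_one] at hI
  rw [show SS 1 z = ∫ u in Ioi (0:ℝ), Real.exp (-z * Real.cosh u) * Real.sinh u ^ 1 from rfl]
  rw [hI]; ring

lemma rec_b0 {z : ℝ} (hz : 0 < z) : z * CC 1 z = SS 1 z + Real.exp (-z) := by
  have hderiv : ∀ u ∈ Ici (0:ℝ), HasDerivAt (fun u => Real.exp (-z * Real.cosh u) * Real.cosh u)
      (Real.exp (-z * Real.cosh u) * Real.sinh u ^ 1
        - z * (Real.exp (-z * Real.cosh u) * (Real.cosh u * Real.sinh u ^ 1))) u := by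
    intro u _
    have h := (hasDerivAt_E z u).mul (Real.hasDerivAt_cosh u)
    refine h.congr_deriv (Eq.symm ?_)
    ring
  have hint : IntegrableOn (fun u => Real.exp (-z * Real.cosh u) * Real.sinh u ^ 1
      - z * (Real.exp (-z * Real.cosh u) * (Real.cosh u * Real.sinh u ^ 1))) (Ioi (0:ℝ)) :=
    (int_SS 1 hz).sub ((int_CC 1 hz).const_mul _)
  have htend : Tendsto (fun u => Real.exp (-z * Real.cosh u) * Real.cosh u) atTop (nhds 0) :=
    tendsto_exp_cosh_mul z hz 1 (fun u hu => by
      simpa using abs_cosh_mul_sinh_pow_le hu 0)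
  have hI := integral_Ioi_of_hasDerivAt_of_tendsto' hderiv hint htend
  rw [integral_sub (int_SS 1 hz) ((int_CC 1 hz).const_mul _), integral_const_mul] at hI
  simp only [Real.cosh_zero, mul_one, zero_sub] at hI
  rw [show SS 1 z = ∫ u in Ioi (0:ℝ), Real.exp (-z * Real.cosh u) * Real.sinh u ^ 1 from rfl,
    show CC 1 z = ∫ u in Ioi (0:ℝ), Real.exp (-z * Real.cosh u) * (Real.cosh u * Real.sinh u ^ 1) from rfl]
  linarith

lemma rec_b1 (k : ℕ) {z : ℝ} (hz : 0 < z) :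
    z * CC (k+2) z = (k+2) * SS (k+2) z + (k+1) * SS k z := by
  have hderiv : ∀ u ∈ Ici (0:ℝ), HasDerivAt
      (fun u => Real.exp (-z * Real.cosh u) * (Real.cosh u * Real.sinh u ^ (k+1)))
      (((k:ℝ)+2) * (Real.exp (-z * Real.cosh u) * Real.sinh u ^ (k+2))
        + ((k:ℝ)+1) * (Real.exp (-z * Real.cosh u) * Real.sinh u ^ k)
        - z * (Real.exp (-z * Real.cosh u) * (Real.cosh u * Real.sinh u ^ (k+2)))) u := by
    intro u _
    have h := (hasDerivAt_E z u).mul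
      ((Real.hasDerivAt_cosh u).mul ((Real.hasDerivAt_sinh u).pow (k+1)))
    refine h.congr_deriv (Eq.symm ?_)
    simp only [Pi.mul_apply, Pi.pow_apply, Nat.add_sub_cancel]
    have hcs : Real.cosh u ^ 2 = Real.sinh u ^ 2 + 1 := Real.cosh_sq u
    push_cast
    linear_combination (-(Real.exp (-z * Real.cosh u)) * ((k:ℝ)+1) * Real.sinh u ^ k) * hcs
  have i1 : IntegrableOn (fun u => Real.exp (-z * Real.cosh u) * Real.sinh u ^ (k+2)) (Ioi (0:ℝ)) :=
    int_SS (k+2) hz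
  have i2 : IntegrableOn (fun u => Real.exp (-z * Real.cosh u) * Real.sinh u ^ k) (Ioi (0:ℝ)) :=
    int_SS k hz
  have i3 : IntegrableOn (fun u => Real.exp (-z * Real.cosh u) * (Real.cosh u * Real.sinh u ^ (k+2)))
      (Ioi (0:ℝ)) := int_CC (k+2) hz
  have hint : IntegrableOn (fun u =>
      ((k:ℝ)+2) * (Real.exp (-z * Real.cosh u) * Real.sinh u ^ (k+2))
        + ((k:ℝ)+1) * (Real.exp (-z * Real.cosh u) * Real.sinh u ^ k)
        - z * (Real.exp (-z * Real.cosh u) * (Real.cosh u * Real.sinh u ^ (k+2)))) (Ioi (0:ℝ)) :=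
    ((i1.const_mul _).add (i2.const_mul _)).sub (i3.const_mul _)
  have htend : Tendsto (fun u => Real.exp (-z * Real.cosh u) * (Real.cosh u * Real.sinh u ^ (k+1)))
      atTop (nhds 0) :=
    tendsto_exp_cosh_mul z hz (k+2) (fun u hu => by
      have := abs_cosh_mul_sinh_pow_le hu (k+1); push_cast at this ⊢; convert this using 2; ring)
  have iA : IntegrableOn (fun u => ((k:ℝ)+2) * (Real.exp (-z * Real.cosh u) * Real.sinh u ^ (k+2))
      + ((k:ℝ)+1) * (Real.exp (-z * Real.cosh u) * Real.sinh u ^ k)) (Ioi (0:ℝ)) := by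
    exact (i1.const_mul _).add (i2.const_mul _)
  have iB : IntegrableOn (fun u => ((k:ℝ)+2) * (Real.exp (-z * Real.cosh u) * Real.sinh u ^ (k+2)))
      (Ioi (0:ℝ)) := by exact i1.const_mul _
  have iC : IntegrableOn (fun u => ((k:ℝ)+1) * (Real.exp (-z * Real.cosh u) * Real.sinh u ^ k))
      (Ioi (0:ℝ)) := by exact i2.const_mul _
  have iD : IntegrableOn (fun u => z * (Real.exp (-z * Real.cosh u) * (Real.cosh u * Real.sinh u ^ (k+2))))
      (Ioi (0:ℝ)) := by exact i3.const_mul _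
  have hI := integral_Ioi_of_hasDerivAt_of_tendsto' hderiv hint htend
  rw [integral_sub iA iD, integral_add iB iC,
    integral_const_mul, integral_const_mul, integral_const_mul] at hI
  simp only [Real.cosh_zero, Real.sinh_zero, mul_one, zero_pow (Nat.succ_ne_zero k),
    mul_zero, sub_zero, zero_sub, neg_zero] at hI
  rw [show SS (k+2) z = ∫ u in Ioi (0:ℝ), Real.exp (-z * Real.cosh u) * Real.sinh u ^ (k+2) from rfl,
    show SS k z = ∫ u in Ioi (0:ℝ), Real.exp (-z * Real.cosh u) * Real.sinh u ^ k from rfl,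
    show CC (k+2) z = ∫ u in Ioi (0:ℝ), Real.exp (-z * Real.cosh u) * (Real.cosh u * Real.sinh u ^ (k+2)) from rfl]
  linarith

lemma besselK_rec (ν : ℝ) {z : ℝ} (hz : 0 < z) :
    ν * besselK ν z = z / 2 * (besselK (ν+1) z - besselK (ν-1) z) := by
  have key1 : ∀ u : ℝ, (ν+1) * u = ν * u + u := fun u => by ring
  have key2 : ∀ u : ℝ, (ν-1) * u = ν * u - u := fun u => by ring
  have hderiv : ∀ u ∈ Ici (0:ℝ), HasDerivAt (fun u => Real.exp (-z * Real.cosh u) * Real.sinh (ν * u))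
      (ν * (Real.exp (-z * Real.cosh u) * Real.cosh (ν * u))
        - (z/2) * (Real.exp (-z * Real.cosh u) * Real.cosh ((ν+1) * u))
        + (z/2) * (Real.exp (-z * Real.cosh u) * Real.cosh ((ν-1) * u))) u := by
    intro u _
    have hlin : HasDerivAt (fun u : ℝ => ν * u) ν u := by
      simpa using (hasDerivAt_id u).const_mul ν
    have hs : HasDerivAt (fun u => Real.sinh (ν * u)) (Real.cosh (ν * u) * ν) u :=
      (Real.hasDerivAt_sinh (ν * u)).comp u hlin
    have h := (hasDerivAt_E z u).mul hs
    refine h.congr_deriv (Eq.symm ?_)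
    rw [key1 u, key2 u, Real.cosh_add, Real.cosh_sub]
    ring
  have i1 : IntegrableOn (fun u => Real.exp (-z * Real.cosh u) * Real.cosh (ν * u)) (Ioi (0:ℝ)) :=
    int_K ν hz
  have i2 : IntegrableOn (fun u => Real.exp (-z * Real.cosh u) * Real.cosh ((ν+1) * u)) (Ioi (0:ℝ)) :=
    int_K (ν+1) hz
  have i3 : IntegrableOn (fun u => Real.exp (-z * Real.cosh u) * Real.cosh ((ν-1) * u)) (Ioi (0:ℝ)) :=
    int_K (ν-1) hz
  have hint : IntegrableOn (fun u =>
      ν * (Real.exp (-z * Real.cosh u) * Real.cosh (ν * u))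
        - (z/2) * (Real.exp (-z * Real.cosh u) * Real.cosh ((ν+1) * u))
        + (z/2) * (Real.exp (-z * Real.cosh u) * Real.cosh ((ν-1) * u))) (Ioi (0:ℝ)) :=
    (((i1.const_mul _).sub (i2.const_mul _)).add (i3.const_mul _))
  have htend : Tendsto (fun u => Real.exp (-z * Real.cosh u) * Real.sinh (ν * u)) atTop (nhds 0) := by
    apply tendsto_exp_cosh_mul z hz ⌈|ν|⌉₊
    intro u hu
    rw [Real.abs_sinh]
    calc Real.sinh |ν * u| ≤ Real.cosh |ν * u| := by
          rw [Real.cosh_eq, Real.sinh_eq]; linarith [Real.exp_pos (-|ν * u|)]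
      _ ≤ Real.exp ((⌈|ν|⌉₊ : ℝ) * u) := by
          rw [Real.cosh_abs]
          have := abs_cosh_mul_le ν hu; rwa [abs_of_pos (Real.cosh_pos _)] at this
  have iA : IntegrableOn (fun u => ν * (Real.exp (-z * Real.cosh u) * Real.cosh (ν * u))
      - (z/2) * (Real.exp (-z * Real.cosh u) * Real.cosh ((ν+1) * u))) (Ioi (0:ℝ)) := by
    exact (i1.const_mul _).sub (i2.const_mul _)
  have iB : IntegrableOn (fun u => ν * (Real.exp (-z * Real.cosh u) * Real.cosh (ν * u)))
      (Ioi (0:ℝ)) := by exact i1.const_mul _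
  have iC : IntegrableOn (fun u => (z/2) * (Real.exp (-z * Real.cosh u) * Real.cosh ((ν+1) * u)))
      (Ioi (0:ℝ)) := by exact i2.const_mul _
  have iD : IntegrableOn (fun u => (z/2) * (Real.exp (-z * Real.cosh u) * Real.cosh ((ν-1) * u)))
      (Ioi (0:ℝ)) := by exact i3.const_mul _
  have hI := integral_Ioi_of_hasDerivAt_of_tendsto' hderiv hint htend
  rw [integral_add iA iD, integral_sub iB iC,
    integral_const_mul, integral_const_mul, integral_const_mul] at hI
  simp only [Real.cosh_zero, mul_zero, Real.sinh_zero, sub_zero, zero_sub, neg_zero] at hI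
  rw [show besselK ν z = ∫ u in Ioi (0:ℝ), Real.exp (-z * Real.cosh u) * Real.cosh (ν * u) from rfl,
    show besselK (ν+1) z = ∫ u in Ioi (0:ℝ), Real.exp (-z * Real.cosh u) * Real.cosh ((ν+1) * u) from rfl,
    show besselK (ν-1) z = ∫ u in Ioi (0:ℝ), Real.exp (-z * Real.cosh u) * Real.cosh ((ν-1) * u) from rfl]
  linarith


lemma besselK_neg (ν z : ℝ) : besselK (-ν) z = besselK ν z := by
  unfold besselK
  congr 1; ext u
  simp only [neg_mul, Real.cosh_neg]

lemma sinh_half_image : (fun u : ℝ => Real.sinh (u/2)) '' (Ioi 0) = Ioi 0 := by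
  ext w
  constructor
  · rintro ⟨u, hu, rfl⟩
    exact Real.sinh_pos_iff.2 (by simpa using half_pos (show (0:ℝ) < u from hu))
  · intro hw
    refine ⟨2 * Real.arsinh w, ?_, ?_⟩
    · have := Real.arsinh_pos_iff.2 hw
      exact mem_Ioi.2 (by linarith)
    · show Real.sinh (2 * Real.arsinh w / 2) = w
      rw [show 2 * Real.arsinh w / 2 = Real.arsinh w by ring, Real.sinh_arsinh]

lemma besselK_half {z : ℝ} (hz : 0 < z) :
    besselK (1/2) z = Real.sqrt (π/(2*z)) * Real.exp (-z) := by
  have hf' : ∀ u ∈ Ioi (0:ℝ), HasDerivWithinAt (fun u : ℝ => Real.sinh (u/2))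
      (Real.cosh (u/2) / 2) (Ioi 0) u := by
    intro u _
    have h1 : HasDerivAt (fun u : ℝ => u/2) (1/2) u := by
      simpa using (hasDerivAt_id u).div_const 2
    have := (Real.hasDerivAt_sinh (u/2)).comp u h1
    exact this.hasDerivWithinAt.congr_deriv (by ring)
  have hinj : InjOn (fun u : ℝ => Real.sinh (u/2)) (Ioi 0) := by
    intro a _ b _ h
    have := Real.sinh_injective h
    linarith
  have key := integral_image_eq_integral_abs_deriv_smul measurableSet_Ioi hf' hinj
    (fun w => 2 * Real.exp (-z * (1 + 2 * w^2)))
  rw [sinh_half_image] at key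
  have hpt : (fun u => |Real.cosh (u/2)/2| • (2 * Real.exp (-z * (1 + 2 * Real.sinh (u/2)^2))))
      = fun u => Real.exp (-z * Real.cosh u) * Real.cosh ((1/2) * u) := by
    ext u
    have hcosh : Real.cosh u = 1 + 2 * Real.sinh (u/2)^2 := by
      have h2 : Real.cosh (2 * (u/2)) = Real.cosh (u/2)^2 + Real.sinh (u/2)^2 :=
        Real.cosh_two_mul (u/2)
      have h3 : Real.cosh (u/2)^2 = Real.sinh (u/2)^2 + 1 := Real.cosh_sq (u/2)
      rw [show 2 * (u/2) = u by ring] at h2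
      linarith
    rw [abs_of_pos (by positivity : (0:ℝ) < Real.cosh (u/2)/2), smul_eq_mul, ← hcosh,
      show (1/2) * u = u/2 by ring]
    ring
  rw [hpt] at key
  have hleft : ∫ w in Ioi (0:ℝ), 2 * Real.exp (-z * (1 + 2 * w^2))
      = Real.sqrt (π/(2*z)) * Real.exp (-z) := by
    have : (fun w : ℝ => 2 * Real.exp (-z * (1 + 2 * w^2)))
        = fun w => (2 * Real.exp (-z)) * Real.exp (-(2*z) * w^2) := by
      ext w; rw [mul_assoc, ← Real.exp_add]; ring_nf
    rw [this, integral_const_mul, integral_gaussian_Ioi]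
    ring
  unfold besselK
  rw [← key, hleft]

def Pred (k : ℕ) (z : ℝ) : Prop :=
  SS k z = Real.Gamma (((k:ℝ)+1)/2) / Real.sqrt π * (2/z) ^ ((k:ℝ)/2) * besselK ((k:ℝ)/2) z
  ∧ CC k z = Real.Gamma (((k:ℝ)+1)/2) / Real.sqrt π * (2/z) ^ ((k:ℝ)/2) * besselK ((k:ℝ)/2 + 1) z

lemma sqrt_pi_ne : Real.sqrt π ≠ 0 := ne_of_gt (Real.sqrt_pos.2 Real.pi_pos)

lemma pred_zero {z : ℝ} (hz : 0 < z) : Pred 0 z := by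
  unfold Pred
  norm_num [Real.Gamma_one_half_eq, div_self sqrt_pi_ne]
  exact ⟨SS_zero, CC_zero⟩

lemma sqrt_term {z : ℝ} (hz : 0 < z) :
    (2/z) ^ ((1:ℝ)/2) * Real.sqrt (π/(2*z)) = Real.sqrt π / z := by
  rw [← Real.sqrt_eq_rpow, ← Real.sqrt_mul (by positivity)]
  rw [show 2/z * (π/(2*z)) = π / z^2 by field_simp]
  rw [Real.sqrt_div Real.pi_pos.le, Real.sqrt_sq hz.le]

lemma pred_one {z : ℝ} (hz : 0 < z) : Pred 1 z := by
  have hz' : z ≠ 0 := ne_of_gt hz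
  have hkey := sqrt_term hz
  have hhalf := besselK_half hz
  have h32 : besselK ((1:ℝ)/2 + 1) z = (1 + 1/z) * besselK (1/2) z := by
    have h := besselK_rec (1/2) hz
    have hneg : besselK ((1:ℝ)/2 - 1) z = besselK (1/2) z := by
      rw [show ((1:ℝ)/2 - 1) = -(1/2) by norm_num, besselK_neg]
    rw [hneg] at h
    field_simp at h ⊢
    linarith
  have hC1 : CC 1 z = (Real.exp (-z)/z + Real.exp (-z))/z := by
    have h := rec_b0 hz
    rw [SS_one hz] at h
    field_simp at h ⊢
    linarith
  unfold Pred
  rw [show (((1:ℕ)):ℝ) = 1 by norm_num, SS_one hz, hC1,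
    show ((1:ℝ)+1)/2 = 1 by norm_num, Real.Gamma_one, h32, hhalf]
  constructor
  · rw [show (1:ℝ) / Real.sqrt π * (2/z) ^ ((1:ℝ)/2) * (Real.sqrt (π/(2*z)) * Real.exp (-z))
        = (2/z) ^ ((1:ℝ)/2) * Real.sqrt (π/(2*z)) * (Real.exp (-z) / Real.sqrt π) by ring, hkey]
    rw [div_mul_div_comm]
    rw [div_eq_div_iff (by positivity) (by positivity)]
    ring
  · rw [show (1:ℝ) / Real.sqrt π * (2/z) ^ ((1:ℝ)/2) * ((1 + 1/z) * (Real.sqrt (π/(2*z)) * Real.exp (-z)))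
        = (2/z) ^ ((1:ℝ)/2) * Real.sqrt (π/(2*z)) * ((1 + 1/z) * Real.exp (-z) / Real.sqrt π) by ring, hkey]
    rw [div_mul_div_comm]
    rw [div_eq_div_iff (by positivity) (by positivity)]
    field_simp
    ring

lemma pred_step (k : ℕ) {z : ℝ} (hz : 0 < z) (ih : Pred k z) : Pred (k+2) z := by
  obtain ⟨hS, hC⟩ := ih
  have hz' : z ≠ 0 := ne_of_gt hz
  have h2z : (0:ℝ) < 2/z := by positivity
  unfold Pred
  rw [show ((k+2:ℕ):ℝ) = (k:ℝ)+2 by push_cast; ring]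
  rw [show ((k:ℝ)+2)/2 = (k:ℝ)/2 + 1 by ring]
  rw [show ((k:ℝ)+2+1)/2 = ((k:ℝ)+1)/2 + 1 by ring]
  rw [show (k:ℝ)/2 + 1 + 1 = (k:ℝ)/2 + 2 by ring]
  rw [Real.Gamma_add_one (by positivity : ((k:ℝ)+1)/2 ≠ 0)]
  rw [Real.rpow_add h2z, Real.rpow_one]
  have ha := rec_a k hz
  have hb := rec_b1 k hz
  have hk := besselK_rec ((k:ℝ)/2 + 1) hz
  rw [show ((k:ℝ)/2 + 1 + 1) = (k:ℝ)/2 + 2 by ring,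
    show ((k:ℝ)/2 + 1 - 1) = (k:ℝ)/2 by ring] at hk
  set G := Real.Gamma (((k:ℝ)+1)/2) with hGdef
  set R := (2/z) ^ ((k:ℝ)/2) with hRdef
  set a := besselK ((k:ℝ)/2) z with hadef
  set b := besselK ((k:ℝ)/2 + 1) z with hbdef
  set c := besselK ((k:ℝ)/2 + 2) z with hcdef
  have hk3 : z * c = z * a + ((k:ℝ)+2) * b := by linear_combination (-2) * hk
  have hS2 : SS (k+2) z = ((k:ℝ)+1)/2 * G / Real.sqrt π * (R * (2/z)) * b := by
    apply mul_left_cancel₀ hz'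
    rw [ha, hC]
    field_simp
  refine ⟨hS2, ?_⟩
  apply mul_left_cancel₀ hz'
  rw [hb, hS2, hS]
  field_simp
  linear_combination (-(G * R)) * hk3

lemma pred_all (k : ℕ) {z : ℝ} (hz : 0 < z) : Pred k z := by
  have h : ∀ n : ℕ, Pred n z ∧ Pred (n+1) z := by
    intro n
    induction n with
    | zero => exact ⟨pred_zero hz, pred_one hz⟩
    | succ m ih => exact ⟨ih.2, pred_step m hz ih.1⟩
  exact (h k).1

lemma cosh_image {b : ℝ} (hb : 0 < b) : ((fun u : ℝ => b * Real.cosh u) '' (Ioi 0)) = Ioi b := by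
  ext y
  simp only [mem_image, mem_Ioi]
  constructor
  · rintro ⟨u, hu, rfl⟩
    have h := Real.one_lt_cosh.2 (ne_of_gt hu)
    nlinarith
  · intro hy
    have ht : 1 < y / b := (one_lt_div hb).2 hy
    set t := y / b with htdef
    have ht2 : 0 ≤ t^2 - 1 := by nlinarith
    have hsq : Real.sqrt (t^2-1) ^ 2 = t^2 - 1 := Real.sq_sqrt ht2
    have hsnn := Real.sqrt_nonneg (t^2-1)
    set s := t + Real.sqrt (t^2 - 1) with hsdef
    have hs1 : 1 < s := by simp only [hsdef]; linarith
    have hs0 : 0 < s := by linarith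
    refine ⟨Real.log s, Real.log_pos hs1, ?_⟩
    have hmul : s * (t - Real.sqrt (t^2-1)) = 1 := by
      simp only [hsdef]; linear_combination -hsq
    have hinv : s⁻¹ = t - Real.sqrt (t^2-1) := inv_eq_of_mul_eq_one_right hmul
    show b * Real.cosh (Real.log s) = y
    rw [Real.cosh_eq, Real.exp_log hs0, Real.exp_neg, Real.exp_log hs0, hinv]
    have : (s + (t - Real.sqrt (t^2-1)))/2 = t := by simp only [hsdef]; ring
    rw [this, htdef, mul_div_cancel₀ _ (ne_of_gt hb)]

lemma cosh_deriv_aux {b : ℝ} : ∀ u ∈ Ioi (0:ℝ),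
    HasDerivWithinAt (fun u : ℝ => b * Real.cosh u) (b * Real.sinh u) (Ioi 0) u :=
  fun u _ => ((Real.hasDerivAt_cosh u).const_mul b).hasDerivWithinAt

lemma cosh_inj_aux {b : ℝ} (hb : 0 < b) : InjOn (fun u : ℝ => b * Real.cosh u) (Ioi (0:ℝ)) := by
  intro p hp q hq h
  have h2 : Real.cosh p = Real.cosh q := mul_left_cancel₀ (ne_of_gt hb) h
  exact Real.cosh_strictMonoOn.injOn (mem_Ici.2 (le_of_lt (mem_Ioi.1 hp))) (mem_Ici.2 (le_of_lt (mem_Ioi.1 hq))) h2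

lemma cosh_subst {b : ℝ} (hb : 0 < b) (g : ℝ → ℝ) :
    (∫ τ in Ioi b, g τ) = ∫ u in Ioi (0:ℝ), |b * Real.sinh u| • g (b * Real.cosh u) := by
  rw [← cosh_image hb,
    integral_image_eq_integral_abs_deriv_smul measurableSet_Ioi cosh_deriv_aux (cosh_inj_aux hb)]

lemma cosh_subst_integrable {b : ℝ} (hb : 0 < b) (g : ℝ → ℝ) :
    IntegrableOn g (Ioi b) ↔
      IntegrableOn (fun u => |b * Real.sinh u| • g (b * Real.cosh u)) (Ioi (0:ℝ)) := by
  rw [← cosh_image hb]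
  exact integrableOn_image_iff_integrableOn_abs_deriv_smul measurableSet_Ioi cosh_deriv_aux
    (cosh_inj_aux hb) g

lemma sqrt_D_eq {r c : ℝ} (hr : 0 < r) (hc : 0 < c) {u : ℝ} (hu : 0 < u) :
    Real.sqrt (c^2 * ((r/c) * Real.cosh u)^2 - r^2) = r * Real.sinh u := by
  have hcs := Real.cosh_sq u
  have h1 : c^2 * ((r/c) * Real.cosh u)^2 - r^2 = (r * Real.sinh u)^2 := by
    field_simp
    linear_combination hcs
  rw [h1, Real.sqrt_sq (by positivity : 0 ≤ r * Real.sinh u)]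

lemma subst_eqOn {r c a : ℝ} (hr : 0 < r) (hc : 0 < c) (k : ℕ) :
    EqOn (fun u => |(r/c) * Real.sinh u| •
        (fun τ => Real.exp (-a*τ) * (Real.sqrt (c^2*τ^2 - r^2) ^ k / Real.sqrt (c^2*τ^2 - r^2)))
          ((r/c) * Real.cosh u))
      (fun u => (r^k/c) * (Real.exp (-(a*r/c) * Real.cosh u) * Real.sinh u ^ k)) (Ioi (0:ℝ)) := by
  intro u hu
  have hu0 : (0:ℝ) < u := hu
  have hsh : 0 < Real.sinh u := Real.sinh_pos_iff.2 hu0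
  simp only [smul_eq_mul]
  rw [sqrt_D_eq hr hc hu0, abs_of_pos (by positivity : (0:ℝ) < (r/c) * Real.sinh u),
    show -a * ((r/c) * Real.cosh u) = -(a*r/c) * Real.cosh u by ring, mul_pow]
  field_simp

lemma subst_value {r c a : ℝ} (hr : 0 < r) (hc : 0 < c) (ha : 0 < a) (k : ℕ) :
    (∫ τ in Ioi (r/c),
        Real.exp (-a*τ) * (Real.sqrt (c^2*τ^2 - r^2) ^ k / Real.sqrt (c^2*τ^2 - r^2)))
      = (r^k/c) * SS k (a*r/c) := by
  have hb : 0 < r/c := div_pos hr hc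
  rw [cosh_subst hb, setIntegral_congr_fun measurableSet_Ioi (subst_eqOn hr hc k),
    integral_const_mul]
  rfl

lemma subst_integrable {r c a : ℝ} (hr : 0 < r) (hc : 0 < c) (ha : 0 < a) (k : ℕ) :
    IntegrableOn (fun τ =>
        Real.exp (-a*τ) * (Real.sqrt (c^2*τ^2 - r^2) ^ k / Real.sqrt (c^2*τ^2 - r^2)))
      (Ioi (r/c)) := by
  have hb : 0 < r/c := div_pos hr hc
  have hz : 0 < a*r/c := by positivity
  rw [cosh_subst_integrable hb]
  exact IntegrableOn.congr_fun ((int_SS k hz).const_mul (r^k/c))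
    ((subst_eqOn hr hc (a := a) k).symm) measurableSet_Ioi

lemma GG_integrable {r c lam mu : ℝ} (hr : 0 < r) (hc : 0 < c) (hlam : 0 < lam) (hmu : 0 < mu) :
    IntegrableOn (fun τ => Real.exp (-(lam+mu)*τ) *
      (Real.exp ((lam/c) * Real.sqrt (c^2*τ^2 - r^2)) / Real.sqrt (c^2*τ^2 - r^2)))
      (Ioi (r/c)) := by
  have hb : 0 < r/c := div_pos hr hc
  rw [cosh_subst_integrable hb]
  have hEq : EqOn
      (fun u => (1/c) * (Real.exp (-((lam+mu)*r/c) * Real.cosh u)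
        * Real.exp ((lam*r/c) * Real.sinh u)))
      (fun u => |(r/c) * Real.sinh u| • (fun τ => Real.exp (-(lam+mu)*τ) *
        (Real.exp ((lam/c) * Real.sqrt (c^2*τ^2 - r^2)) / Real.sqrt (c^2*τ^2 - r^2)))
          ((r/c) * Real.cosh u)) (Ioi (0:ℝ)) := by
    intro u hu
    have hu0 : (0:ℝ) < u := hu
    have hsh : 0 < Real.sinh u := Real.sinh_pos_iff.2 hu0
    simp only [smul_eq_mul]
    rw [sqrt_D_eq hr hc hu0, abs_of_pos (by positivity : (0:ℝ) < (r/c) * Real.sinh u),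
      show -(lam+mu) * ((r/c) * Real.cosh u) = -((lam+mu)*r/c) * Real.cosh u by ring,
      show (lam/c) * (r * Real.sinh u) = (lam*r/c) * Real.sinh u by ring]
    field_simp
  apply IntegrableOn.congr_fun ?_ hEq measurableSet_Ioi
  have hmaj : IntegrableOn (fun u => (1/c) * (Real.exp (-(mu*r/c) * Real.cosh u) * 1))
      (Ioi (0:ℝ)) :=
    (integrableOn_exp_cosh_mul (mu*r/c) (by positivity) 0 continuous_const
      (fun u hu => by norm_num)).const_mul _
  apply Integrable.mono hmaj
  · apply Continuous.aestronglyMeasurable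
    exact continuous_const.mul ((Real.continuous_exp.comp
      (continuous_const.mul Real.continuous_cosh)).mul (Real.continuous_exp.comp
        (continuous_const.mul Real.continuous_sinh)))
  · apply Filter.Eventually.of_forall
    intro u
    rw [Real.norm_eq_abs, Real.norm_eq_abs]
    have h1 : Real.sinh u ≤ Real.cosh u := by
      rw [Real.sinh_eq, Real.cosh_eq]; linarith [Real.exp_pos (-u)]
    have h2 : Real.exp (-((lam+mu)*r/c) * Real.cosh u) * Real.exp ((lam*r/c) * Real.sinh u)
        ≤ Real.exp (-(mu*r/c) * Real.cosh u) := by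
      rw [← Real.exp_add, Real.exp_le_exp]
      have h3 : (lam*r/c) * Real.sinh u ≤ (lam*r/c) * Real.cosh u :=
        mul_le_mul_of_nonneg_left h1 (by positivity)
      have : -((lam+mu)*r/c) * Real.cosh u + (lam*r/c) * Real.cosh u
          = -(mu*r/c) * Real.cosh u := by ring
      linarith
    rw [abs_of_nonneg (by positivity), abs_of_nonneg (by positivity)]
    have hc' : (0:ℝ) < 1/c := by positivity
    rw [mul_one]
    exact mul_le_mul_of_nonneg_left h2 hc'.le

theorem stmt4 (lam mu c : ℝ) (hlam : 0 < lam) (hmu : 0 < mu) (hc : 0 < c)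
    (x : EuclideanSpace ℝ (Fin 2)) (hx : 0 < ‖x‖) :
    (lam * mu / (2 * π * c)) *
        ∫ τ in Ioi (‖x‖ / c),
          Real.exp (-(lam + mu) * τ) *
            (Real.exp ((lam / c) * Real.sqrt (c ^ 2 * τ ^ 2 - ‖x‖ ^ 2)) /
              Real.sqrt (c ^ 2 * τ ^ 2 - ‖x‖ ^ 2))
      = (lam * mu / (2 * π ^ ((3 : ℝ) / 2) * c ^ 2)) *
          ∑' k : ℕ, (lam ^ k / (Nat.factorial k : ℝ)) * Real.Gamma (((k : ℝ) + 1) / 2)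
            * (2 * ‖x‖ / (c * (lam + mu))) ^ ((k : ℝ) / 2)
            * besselK ((k : ℝ) / 2) ((lam + mu) * ‖x‖ / c) := by
  set r := ‖x‖ with hrdef
  have hr : 0 < r := hx
  have ha : 0 < lam + mu := by linarith
  have hb : 0 < r / c := div_pos hr hc
  have hz : 0 < (lam + mu) * r / c := by positivity
  set z := (lam + mu) * r / c with hzdef
  set f : ℕ → ℝ → ℝ := fun k τ => Real.exp (-(lam+mu)*τ) *
    (((lam/c) * Real.sqrt (c^2*τ^2 - r^2)) ^ k
      / ((Nat.factorial k : ℝ) * Real.sqrt (c^2*τ^2 - r^2))) with hfdef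
  have hfeq : ∀ k : ℕ, f k = fun τ => ((lam/c)^k / (Nat.factorial k : ℝ)) *
      (Real.exp (-(lam+mu)*τ) * (Real.sqrt (c^2*τ^2 - r^2) ^ k / Real.sqrt (c^2*τ^2 - r^2))) := by
    intro k
    funext τ
    simp only [hfdef]
    rw [mul_pow]
    ring
  have hterm : ∀ k : ℕ, (∫ τ in Ioi (r/c), f k τ)
      = ((lam/c)^k / (Nat.factorial k : ℝ)) * ((r^k/c) * SS k z) := by
    intro k
    rw [hfeq k, integral_const_mul, subst_value hr hc ha k]
  have hint : ∀ k : ℕ, IntegrableOn (f k) (Ioi (r/c)) := by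
    intro k
    rw [hfeq k]
    exact (subst_integrable hr hc ha k).const_mul _
  have hnn : ∀ k : ℕ, ∀ τ ∈ Ioi (r/c), 0 ≤ f k τ := by
    intro k τ _
    simp only [hfdef]
    positivity
  have hsumm : ∀ τ : ℝ, Summable (fun k => f k τ) := by
    intro τ
    apply Summable.congr
      (((Real.summable_pow_div_factorial ((lam/c) * Real.sqrt (c^2*τ^2 - r^2))).mul_left
        (Real.exp (-(lam+mu)*τ) / Real.sqrt (c^2*τ^2 - r^2))))
    intro k
    simp only [hfdef]
    ring
  have hseries : ∀ τ ∈ Ioi (r/c),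
      Real.exp (-(lam+mu)*τ) * (Real.exp ((lam/c) * Real.sqrt (c^2*τ^2 - r^2))
        / Real.sqrt (c^2*τ^2 - r^2)) = ∑' k : ℕ, f k τ := by
    intro τ _
    have hexp : Real.exp ((lam/c) * Real.sqrt (c^2*τ^2 - r^2))
        = ∑' k : ℕ, ((lam/c) * Real.sqrt (c^2*τ^2 - r^2))^k / (Nat.factorial k : ℝ) := by
      rw [Real.exp_eq_exp_ℝ, NormedSpace.exp_eq_tsum_div]
    rw [hexp, show Real.exp (-(lam+mu)*τ) *
        ((∑' (k : ℕ), ((lam/c) * Real.sqrt (c^2*τ^2 - r^2))^k / (Nat.factorial k : ℝ))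
          / Real.sqrt (c^2*τ^2 - r^2))
      = (Real.exp (-(lam+mu)*τ) / Real.sqrt (c^2*τ^2 - r^2)) *
        ∑' (k : ℕ), ((lam/c) * Real.sqrt (c^2*τ^2 - r^2))^k / (Nat.factorial k : ℝ) by ring,
      ← tsum_mul_left]
    apply tsum_congr
    intro k
    simp only [hfdef]
    ring
  have hGG := GG_integrable (lam := lam) (mu := mu) hr hc hlam hmu
  have hps : ∀ n : ℕ, (∑ k ∈ Finset.range n, ∫ τ in Ioi (r/c), f k τ)
      ≤ ∫ τ in Ioi (r/c), Real.exp (-(lam+mu)*τ) *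
          (Real.exp ((lam/c) * Real.sqrt (c^2*τ^2 - r^2)) / Real.sqrt (c^2*τ^2 - r^2)) := by
    intro n
    rw [← integral_finset_sum _ (fun i _ => hint i)]
    apply setIntegral_mono_on (integrable_finset_sum _ (fun i _ => hint i)) hGG measurableSet_Ioi
    intro τ hτ
    rw [hseries τ hτ]
    exact Summable.sum_le_tsum (Finset.range n) (fun i _ => hnn i τ hτ) (hsumm τ)
  have hnonnegint : ∀ k : ℕ, 0 ≤ ∫ τ in Ioi (r/c), f k τ :=
    fun k => setIntegral_nonneg measurableSet_Ioi (hnn k)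
  have hsumint : Summable (fun k => ∫ τ in Ioi (r/c), f k τ) :=
    summable_of_sum_range_le hnonnegint hps
  have hsumnorm : Summable (fun k => ∫ τ in Ioi (r/c), ‖f k τ‖) := by
    apply hsumint.congr
    intro k
    exact (setIntegral_congr_fun measurableSet_Ioi
      (fun τ hτ => (Real.norm_of_nonneg (hnn k τ hτ)))).symm
  have hswap := integral_tsum_of_summable_integral_norm hint hsumnorm
  rw [setIntegral_congr_fun measurableSet_Ioi (fun τ hτ => hseries τ hτ), ← hswap]
  -- now rewrite term values
  have hSval : ∀ k : ℕ, SS k z = Real.Gamma (((k:ℝ)+1)/2) / Real.sqrt π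
      * (2/z) ^ ((k:ℝ)/2) * besselK ((k:ℝ)/2) z := fun k => (pred_all k hz).1
  have key2 : π ^ ((3:ℝ)/2) = π * Real.sqrt π := by
    rw [show (3:ℝ)/2 = 1 + 1/2 by norm_num, Real.rpow_add Real.pi_pos, Real.rpow_one,
      Real.sqrt_eq_rpow]
  have key1 : ∀ k : ℕ, (2 * r / (c * (lam + mu))) ^ ((k:ℝ)/2)
      = (r/c)^k * (2/z) ^ ((k:ℝ)/2) := by
    intro k
    have hx1 : 2 * r / (c * (lam + mu)) = (r/c)^2 * (2/z) := by
      rw [hzdef]; field_simp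
    rw [hx1, Real.mul_rpow (sq_nonneg _) (by positivity)]
    congr 1
    rw [← Real.rpow_natCast (r/c) 2, ← Real.rpow_mul hb.le,
      show ((2:ℕ):ℝ) * ((k:ℝ)/2) = (k:ℝ) by push_cast; ring, Real.rpow_natCast]
  rw [← tsum_mul_left, ← tsum_mul_left]
  apply tsum_congr
  intro k
  rw [hterm k, hSval k, key1 k, key2]
  have hfac : ((Nat.factorial k : ℝ)) ≠ 0 := Nat.cast_ne_zero.2 (Nat.factorial_ne_zero k)
  rw [div_pow r c k]
  field_simp
  rw [div_pow]
  field_simp
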